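/- Let b, c, e ∈ ℂ with e ≠ 0, and let N₁(x) = x(4ec²x⁵ − 42becx⁴ − (6c³ + 48eb²)x³ + 9b²cx + 6b³), N₂(x) = x(8ecx⁵ − 12bcex⁴ − (24eb² + 12c³)x³ − 12bc²x² + 3b³), N₃(x) = 8c²e²x⁶ − 84bce²x⁵ − (12c³e + 168b²e²)x⁴ + 21b³ex − 3b²c². Then the Wronskian W(N₁,N₂,N₃) vanishes identically as a function of x ∈ ℂ if and only if b = 0 or c = 0. -/

import Mathlib

/-- The Wronskian of three functions of a complex variable: the determinant of the
`3×3` matrix with rows `(f, g, h)`, `(f', g', h')`, `(f'', g'', h'')`. -/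
noncomputable def wronskian3 (f g h : ℂ → ℂ) (x : ℂ) : ℂ :=
  Matrix.det
    !![f x, g x, h x;
       deriv f x, deriv g x, deriv h x;
       deriv (deriv f) x, deriv (deriv g) x, deriv (deriv h) x]

lemma dp6 (a0 a1 a2 a3 a4 a5 a6 : ℂ) :
    deriv (fun x : ℂ => a6*x^6 + a5*x^5 + a4*x^4 + a3*x^3 + a2*x^2 + a1*x + a0)
    = fun x => 6*a6*x^5 + 5*a5*x^4 + 4*a4*x^3 + 3*a3*x^2 + 2*a2*x + a1 := by
  funext x
  have h : HasDerivAt (fun x : ℂ => a6*x^6 + a5*x^5 + a4*x^4 + a3*x^3 + a2*x^2 + a1*x + a0)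
      (6*a6*x^5 + 5*a5*x^4 + 4*a4*x^3 + 3*a3*x^2 + 2*a2*x + a1) x := by
    have h6 := ((hasDerivAt_pow 6 x).const_mul a6)
    have h5 := ((hasDerivAt_pow 5 x).const_mul a5)
    have h4 := ((hasDerivAt_pow 4 x).const_mul a4)
    have h3 := ((hasDerivAt_pow 3 x).const_mul a3)
    have h2 := ((hasDerivAt_pow 2 x).const_mul a2)
    have h1 := ((hasDerivAt_id x).const_mul a1)
    have := ((((((h6.add h5).add h4).add h3).add h2).add h1).add_const a0)
    convert this using 1
    all_goals first | rfl | ring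
  exact h.deriv

lemma dp5 (a0 a1 a2 a3 a4 a5 : ℂ) :
    deriv (fun x : ℂ => a5*x^5 + a4*x^4 + a3*x^3 + a2*x^2 + a1*x + a0)
    = fun x => 5*a5*x^4 + 4*a4*x^3 + 3*a3*x^2 + 2*a2*x + a1 := by
  funext x
  have h : HasDerivAt (fun x : ℂ => a5*x^5 + a4*x^4 + a3*x^3 + a2*x^2 + a1*x + a0)
      (5*a5*x^4 + 4*a4*x^3 + 3*a3*x^2 + 2*a2*x + a1) x := by
    have h5 := ((hasDerivAt_pow 5 x).const_mul a5)
    have h4 := ((hasDerivAt_pow 4 x).const_mul a4)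
    have h3 := ((hasDerivAt_pow 3 x).const_mul a3)
    have h2 := ((hasDerivAt_pow 2 x).const_mul a2)
    have h1 := ((hasDerivAt_id x).const_mul a1)
    have := (((((h5.add h4).add h3).add h2).add h1).add_const a0)
    convert this using 1
    all_goals first | rfl | ring
  exact h.deriv

/-- For `e ≠ 0` and the explicit polynomials `N₁, N₂, N₃` below,
the Wronskian `W(N₁,N₂,N₃)` vanishes identically iff `b = 0` or `c = 0`. -/
theorem statement10
    (b c e : ℂ) (he : e ≠ 0)
    (N₁ N₂ N₃ : ℂ → ℂ)
    (hN₁ : ∀ x : ℂ, N₁ x = x * (4 * e * c ^ 2 * x ^ 5 - 42 * b * e * c * x ^ 4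
      - (6 * c ^ 3 + 48 * e * b ^ 2) * x ^ 3 + 9 * b ^ 2 * c * x + 6 * b ^ 3))
    (hN₂ : ∀ x : ℂ, N₂ x = x * (8 * e * c * x ^ 5 - 12 * b * c * e * x ^ 4
      - (24 * e * b ^ 2 + 12 * c ^ 3) * x ^ 3 - 12 * b * c ^ 2 * x ^ 2 + 3 * b ^ 3))
    (hN₃ : ∀ x : ℂ, N₃ x = 8 * c ^ 2 * e ^ 2 * x ^ 6 - 84 * b * c * e ^ 2 * x ^ 5
      - (12 * c ^ 3 * e + 168 * b ^ 2 * e ^ 2) * x ^ 4 + 21 * b ^ 3 * e * x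
      - 3 * b ^ 2 * c ^ 2) :
    (∀ x : ℂ, wronskian3 N₁ N₂ N₃ x = 0) ↔ (b = 0 ∨ c = 0) := by
  have h1 : N₁ = fun x : ℂ => (4*e*c^2)*x^6 + (-(42*b*e*c))*x^5 + (-(6*c^3+48*e*b^2))*x^4
      + (0:ℂ)*x^3 + (9*b^2*c)*x^2 + (6*b^3)*x + 0 := funext fun x => by rw [hN₁ x]; ring
  have h2 : N₂ = fun x : ℂ => (8*e*c)*x^6 + (-(12*b*c*e))*x^5 + (-(24*e*b^2+12*c^3))*x^4
      + (-(12*b*c^2))*x^3 + (0:ℂ)*x^2 + (3*b^3)*x + 0 := funext fun x => by rw [hN₂ x]; ring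
  have h3 : N₃ = fun x : ℂ => (8*c^2*e^2)*x^6 + (-(84*b*c*e^2))*x^5 + (-(12*c^3*e+168*b^2*e^2))*x^4
      + (0:ℂ)*x^3 + (0:ℂ)*x^2 + (21*b^3*e)*x + (-(3*b^2*c^2)) := funext fun x => by rw [hN₃ x]; ring
  simp only [wronskian3, h1, h2, h3, dp6, dp5]
  constructor
  · intro h
    have h0 := h 0
    simp [Matrix.det_fin_three] at h0
    tauto
  · rintro (rfl | rfl) x <;> simp [Matrix.det_fin_three] <;> ring
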